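/- Let A be a finitely generated monoid and H_A its Hall algebra. The subspace J^α spanned by the delta functions δ_M over isomorphism classes of finite A-modules M that are NOT of type α is a Hopf ideal of H_A; that is, J^α is a two-sided ideal for the convolution product, a co-ideal for the coproduct, contained in the augmentation ideal, so that H_A/J^α is again a graded, connected, co-commutative Hopf algebra. -/

import Mathlib

universe u v

/-- A module over a monoid-with-zero `A` on a pointed set ("vector space over 𝔽₁"):
a pointed set `(M, 0)` with an action of `A` satisfying `1•m = m`, `(a*b)•m = a•(b•m)`,
`0•m = 0` and `a•0 = 0`. -/
structure FModule (A : Type v) [MonoidWithZero A] : Type (max (u + 1) v) where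
  carrier : Type u
  zero : carrier
  smul : A → carrier → carrier
  one_smul : ∀ m, smul 1 m = m
  mul_smul : ∀ a b m, smul (a * b) m = smul a (smul b m)
  zero_smul : ∀ m, smul 0 m = zero
  smul_zero : ∀ a, smul a zero = zero

namespace FModule

variable {A : Type v} [MonoidWithZero A]

/-- `N` is an `A`-submodule of `M` : a subset containing the basepoint and closed under
the action of `A`. -/
def IsSubmod (M : FModule A) (N : Set M.carrier) : Prop :=
  M.zero ∈ N ∧ ∀ (a : A), ∀ m ∈ N, M.smul a m ∈ N

/-- The submodule `N ⊆ M` as an `A`-module in its own right. -/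
def sub (M : FModule A) (N : Set M.carrier) (h : M.IsSubmod N) : FModule A where
  carrier := N
  zero := ⟨M.zero, h.1⟩
  smul a m := ⟨M.smul a m.1, h.2 a m.1 m.2⟩
  one_smul m := Subtype.ext (M.one_smul m.1)
  mul_smul a b m := Subtype.ext (M.mul_smul a b m.1)
  zero_smul m := Subtype.ext (M.zero_smul m.1)
  smul_zero a := Subtype.ext (M.smul_zero a)

open Classical in
/-- The quotient `M/N` of `M` by a submodule `N`: the pointed set `(M ∖ N) ∪ {0}`
with the induced `A`-action. -/
noncomputable def quot (M : FModule A) (N : Set M.carrier) (h : M.IsSubmod N) :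
    FModule A where
  carrier := {x : M.carrier // x = M.zero ∨ x ∉ N}
  zero := ⟨M.zero, Or.inl rfl⟩
  smul a m := if hmem : M.smul a m.1 ∈ N then ⟨M.zero, Or.inl rfl⟩
    else ⟨M.smul a m.1, Or.inr hmem⟩
  one_smul := by
    classical
    rintro ⟨x, hx⟩
    by_cases hmem : M.smul 1 x ∈ N
    · have hxN : x ∈ N := by rwa [M.one_smul] at hmem
      have hx0 : x = M.zero := hx.resolve_right fun hc => hc hxN
      simp only [dif_pos hmem]
      exact Subtype.ext hx0.symm
    · simp only [dif_neg hmem]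
      exact Subtype.ext (M.one_smul x)
  mul_smul := by
    classical
    rintro a b ⟨x, hx⟩
    by_cases hb : M.smul b x ∈ N
    · have hab : M.smul (a * b) x ∈ N := by
        rw [M.mul_smul]; exact h.2 a _ hb
      have h0 : M.smul a M.zero ∈ N := by
        rw [M.smul_zero]; exact h.1
      simp only [dif_pos hb, dif_pos hab, dif_pos h0]
    · by_cases hab : M.smul a (M.smul b x) ∈ N
      · have hab' : M.smul (a * b) x ∈ N := by rw [M.mul_smul]; exact hab
        simp only [dif_pos hab', dif_neg hb, dif_pos hab]
      · have hab' : M.smul (a * b) x ∉ N := by rw [M.mul_smul]; exact hab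
        simp only [dif_neg hab', dif_neg hb, dif_neg hab]
        exact Subtype.ext (M.mul_smul a b x)
  zero_smul := by
    classical
    rintro ⟨x, hx⟩
    have h0 : M.smul 0 x ∈ N := by rw [M.zero_smul]; exact h.1
    simp only [dif_pos h0]
  smul_zero := by
    classical
    intro a
    have h0 : M.smul a M.zero ∈ N := by rw [M.smul_zero]; exact h.1
    simp only [dif_pos h0]

/-- A morphism of `A`-modules: a pointed map compatible with the `A`-action. -/
structure Hom (M N : FModule A) where
  toFun : M.carrier → N.carrier
  map_zero : toFun M.zero = N.zero
  map_smul : ∀ a m, toFun (M.smul a m) = N.smul a (toFun m)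

/-- A morphism is normal if every fibre other than the fibre of the basepoint has at
most one element. -/
def Hom.Normal {M N : FModule A} (f : Hom M N) : Prop :=
  ∀ m m', f.toFun m = f.toFun m' → f.toFun m ≠ N.zero → m = m'

/-- Composition of morphisms. -/
def Hom.comp {M N L : FModule A} (g : Hom N L) (f : Hom M N) : Hom M L where
  toFun := g.toFun ∘ f.toFun
  map_zero := by
    show g.toFun (f.toFun M.zero) = L.zero
    rw [f.map_zero, g.map_zero]
  map_smul a m := by
    show g.toFun (f.toFun (M.smul a m)) = L.smul a (g.toFun (f.toFun m))
    rw [f.map_smul, g.map_smul]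

/-- An isomorphism of `A`-modules. -/
structure Iso (M N : FModule A) where
  toEquiv : M.carrier ≃ N.carrier
  map_zero : toEquiv M.zero = N.zero
  map_smul : ∀ a m, toEquiv (M.smul a m) = N.smul a (toEquiv m)

def Iso.refl (M : FModule A) : Iso M M := ⟨Equiv.refl _, rfl, fun _ _ => rfl⟩

def Iso.symm {M N : FModule A} (e : Iso M N) : Iso N M where
  toEquiv := e.toEquiv.symm
  map_zero := by rw [Equiv.symm_apply_eq, e.map_zero]
  map_smul a m := by
    apply e.toEquiv.injective
    rw [e.map_smul, Equiv.apply_symm_apply, Equiv.apply_symm_apply]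

def Iso.trans {M N L : FModule A} (e : Iso M N) (f : Iso N L) : Iso M L where
  toEquiv := e.toEquiv.trans f.toEquiv
  map_zero := by
    simp only [Equiv.trans_apply, e.map_zero, f.map_zero]
  map_smul a m := by
    simp only [Equiv.trans_apply, e.map_smul, f.map_smul]

/-- The wedge sum (direct sum, coproduct) `M ⊕ N` of two `A`-modules, realized as the
subset of `M × N` of pairs with at least one coordinate equal to the basepoint. -/
def wedge (M N : FModule A) : FModule A where
  carrier := {p : M.carrier × N.carrier // p.1 = M.zero ∨ p.2 = N.zero}
  zero := ⟨(M.zero, N.zero), Or.inl rfl⟩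
  smul a p := ⟨(M.smul a p.1.1, N.smul a p.1.2), by
    rcases p.2 with h1 | h2
    · exact Or.inl (by rw [h1, M.smul_zero])
    · exact Or.inr (by rw [h2, N.smul_zero])⟩
  one_smul p := Subtype.ext (Prod.ext (M.one_smul _) (N.one_smul _))
  mul_smul a b p := Subtype.ext (Prod.ext (M.mul_smul _ _ _) (N.mul_smul _ _ _))
  zero_smul p := Subtype.ext (Prod.ext (M.zero_smul _) (N.zero_smul _))
  smul_zero a := Subtype.ext (Prod.ext (M.smul_zero _) (N.smul_zero _))

/-- A module `M` is of type α if every `a ∈ A` acts on `M` by a normal map of pointed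
sets, i.e. `a•m₁ = a•m₂` implies `m₁ = m₂` or `a•m₁ = a•m₂ = 0`. -/
def TypeAlpha (M : FModule A) : Prop :=
  ∀ (a : A) (m₁ m₂ : M.carrier),
    M.smul a m₁ = M.smul a m₂ → m₁ = m₂ ∨ M.smul a m₁ = M.zero

/-- A module is indecomposable if it is nonzero and admits no decomposition as a wedge
sum (internally: a pair of submodules covering `M` and meeting only in `0`) with both
pieces nonzero. -/
def Indecomposable (M : FModule A) : Prop :=
  (∃ m : M.carrier, m ≠ M.zero) ∧
  ∀ P Q : Set M.carrier, M.IsSubmod P → M.IsSubmod Q → P ∪ Q = Set.univ →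
    P ∩ Q ⊆ {M.zero} → P = {M.zero} ∨ Q = {M.zero}

end FModule
namespace FModule

variable (A : Type v) [MonoidWithZero A]

/-- A finite `A`-module, bundled. -/
def FinFMod := {M : FModule.{0} A // Finite M.carrier}

variable {A}

/-- The submodule, as a finite bundled module. -/
def FinFMod.sub (M : FinFMod A) (N : Set M.1.carrier) (h : M.1.IsSubmod N) : FinFMod A :=
  ⟨M.1.sub N h, by haveI := M.2; exact inferInstanceAs (Finite ↥N)⟩

/-- The quotient, as a finite bundled module. -/
noncomputable def FinFMod.quot (M : FinFMod A) (N : Set M.1.carrier) (h : M.1.IsSubmod N) :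
    FinFMod A :=
  ⟨M.1.quot N h, by
    haveI := M.2
    exact inferInstanceAs (Finite {x : M.1.carrier // x = M.1.zero ∨ x ∉ N})⟩

/-- The wedge sum, as a finite bundled module. -/
def FinFMod.wedge (M N : FinFMod A) : FinFMod A :=
  ⟨M.1.wedge N.1, by
    haveI := M.2; haveI := N.2
    exact inferInstanceAs
      (Finite {p : M.1.carrier × N.1.carrier // p.1 = M.1.zero ∨ p.2 = N.1.zero})⟩

/-- The zero module. -/
def FinFMod.zeroMod : FinFMod A :=
  ⟨⟨PUnit, PUnit.unit, fun _ _ => PUnit.unit, fun _ => rfl, fun _ _ _ => rfl,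
    fun _ => rfl, fun _ => rfl⟩, inferInstance⟩

variable (A)

/-- Isomorphism classes of finite `A`-modules. -/
instance fmodSetoid : Setoid (FinFMod A) where
  r M N := Nonempty (Iso M.1 N.1)
  iseqv := ⟨fun M => ⟨Iso.refl M.1⟩, fun ⟨e⟩ => ⟨e.symm⟩, fun ⟨e⟩ ⟨f⟩ => ⟨e.trans f⟩⟩

/-- The set of isomorphism classes of finite `A`-modules. -/
def IsoCl := Quotient (fmodSetoid A)

variable {A}

/-- The isomorphism class of a finite module. -/
def clsOf (M : FinFMod A) : IsoCl A := Quotient.mk _ M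

/-- The collection of submodules of a module. -/
def Submods (M : FModule A) := {N : Set M.carrier // M.IsSubmod N}

open scoped Classical in
/-- The Hall algebra convolution product:
`(f ⋆ g)(M) = ∑_{N ⊆ M} f(M/N) g(N)`, the (finite) sum being over all submodules. -/
noncomputable def hallMul (f g : IsoCl A → ℚ) : IsoCl A → ℚ := fun c =>
  ∑ᶠ N : Submods (Quotient.out c).1,
    f (clsOf ((Quotient.out c).quot N.1 N.2)) * g (clsOf ((Quotient.out c).sub N.1 N.2))

open scoped Classical in
/-- The delta function supported at a single isomorphism class. -/
noncomputable def deltaF (c : IsoCl A) : IsoCl A → ℚ := fun d => if d = c then 1 else 0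

/-- Finitely supported functions (the underlying space of the Hall algebra). -/
def FinSupp (f : IsoCl A → ℚ) : Prop := (Function.support f).Finite

/-- Finitely supported functions of two variables. -/
def FinSupp₂ (F : IsoCl A → IsoCl A → ℚ) : Prop :=
  (Function.support (Function.uncurry F)).Finite

/-- The Hall algebra coproduct, in coordinates: `Δ(f)(M, N) = f(M ⊕ N)`. -/
noncomputable def coprodF (f : IsoCl A → ℚ) : IsoCl A → IsoCl A → ℚ := fun c d =>
  f (clsOf ((Quotient.out c).wedge (Quotient.out d)))

/-- The componentwise convolution product on two-variable functions
(the product on `H ⊗ H` in coordinates). -/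
noncomputable def hallMul₂ (F G : IsoCl A → IsoCl A → ℚ) : IsoCl A → IsoCl A → ℚ :=
  fun c d =>
    ∑ᶠ N : Submods (Quotient.out c).1, ∑ᶠ P : Submods (Quotient.out d).1,
      F (clsOf ((Quotient.out c).quot N.1 N.2)) (clsOf ((Quotient.out d).quot P.1 P.2)) *
      G (clsOf ((Quotient.out c).sub N.1 N.2)) (clsOf ((Quotient.out d).sub P.1 P.2))

/-- The dimension of an isomorphism class: `dim M = |M| - 1`. -/
noncomputable def dimCl (c : IsoCl A) : ℕ := Nat.card (Quotient.out c).1.carrier - 1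

/-- The counit: evaluation at the class of the zero module. -/
noncomputable def counitF (f : IsoCl A → ℚ) : ℚ := f (clsOf (FinFMod.zeroMod))

end FModule
namespace FModule

variable {A : Type v} [MonoidWithZero A]

/-- An isomorphism class of finite `A`-modules consists of modules of type α. -/
def ClTypeAlpha (c : IsoCl A) : Prop := (Quotient.out c).1.TypeAlpha

/-- Membership in `J^α ⊆ H_A`: the span of the delta functions of the classes that are
NOT of type α, i.e. the finitely supported functions vanishing on all type α classes. -/
def MemJalpha (f : IsoCl A → ℚ) : Prop :=
  FinSupp f ∧ ∀ c : IsoCl A, ClTypeAlpha c → f c = 0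

end FModule

namespace FModule

variable {A : Type v} [MonoidWithZero A]

/-! ### Auxiliary lemmas -/

lemma TypeAlpha.of_iso {M N : FModule A} (e : Iso M N) (h : N.TypeAlpha) : M.TypeAlpha := by
  intro a m₁ m₂ hm
  rcases h a (e.toEquiv m₁) (e.toEquiv m₂) (by rw [← e.map_smul, ← e.map_smul, hm]) with h1 | h1
  · exact Or.inl (e.toEquiv.injective h1)
  · refine Or.inr (e.toEquiv.injective ?_)
    rw [e.map_smul, h1, e.map_zero]

lemma clTypeAlpha_clsOf {M : FinFMod A} : ClTypeAlpha (clsOf M) ↔ M.1.TypeAlpha := by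
  obtain ⟨e⟩ : Nonempty (Iso (Quotient.out (clsOf M)).1 M.1) := Quotient.mk_out M
  exact ⟨fun h => h.of_iso e.symm, fun h => h.of_iso e⟩

lemma TypeAlpha.typeSub {M : FModule A} (h : M.TypeAlpha) {N : Set M.carrier}
    (hN : M.IsSubmod N) : (M.sub N hN).TypeAlpha := by
  intro a m₁ m₂ hm
  rcases h a m₁.1 m₂.1 (congrArg Subtype.val hm) with h1 | h1
  · exact Or.inl (Subtype.ext h1)
  · exact Or.inr (Subtype.ext h1)

open Classical in
lemma quot_smul_def (M : FModule A) (N : Set M.carrier) (h : M.IsSubmod N) (a : A)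
    (m : (M.quot N h).carrier) :
    (M.quot N h).smul a m =
      if hmem : M.smul a m.1 ∈ N then ⟨M.zero, Or.inl rfl⟩
      else ⟨M.smul a m.1, Or.inr hmem⟩ := rfl

lemma quot_zero_def (M : FModule A) (N : Set M.carrier) (h : M.IsSubmod N) :
    (M.quot N h).zero = ⟨M.zero, Or.inl rfl⟩ := rfl

lemma TypeAlpha.typeQuot {M : FModule A} (h : M.TypeAlpha) {N : Set M.carrier}
    (hN : M.IsSubmod N) : (M.quot N hN).TypeAlpha := by
  classical
  rintro a ⟨m₁, hm₁⟩ ⟨m₂, hm₂⟩ hm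
  dsimp only [quot] at hm
  by_cases h1 : M.smul a m₁ ∈ N
  · by_cases h2 : M.smul a m₂ ∈ N
    · right
      dsimp only [quot]
      rw [dif_pos h1]
    · rw [dif_pos h1, dif_neg h2] at hm
      have : M.zero = M.smul a m₂ := congrArg Subtype.val hm
      exact absurd (this ▸ hN.1) h2
  · by_cases h2 : M.smul a m₂ ∈ N
    · rw [dif_neg h1, dif_pos h2] at hm
      have : M.smul a m₁ = M.zero := congrArg Subtype.val hm
      exact absurd (this ▸ hN.1) h1
    · rw [dif_neg h1, dif_neg h2] at hm
      have hval : M.smul a m₁ = M.smul a m₂ := congrArg Subtype.val hm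
      rcases h a m₁ m₂ hval with h3 | h3
      · exact Or.inl (Subtype.ext h3)
      · exact absurd (h3 ▸ hN.1) h1

lemma TypeAlpha.typeWedge {M N : FModule A} (hM : M.TypeAlpha) (hN : N.TypeAlpha) :
    (M.wedge N).TypeAlpha := by
  rintro a ⟨⟨m₁, n₁⟩, hp₁⟩ ⟨⟨m₂, n₂⟩, hp₂⟩ hm
  have hm1 : M.smul a m₁ = M.smul a m₂ := congrArg (fun p => p.1.1) hm
  have hn1 : N.smul a n₁ = N.smul a n₂ := congrArg (fun p => p.1.2) hm
  have hz : M.smul a m₁ = M.zero → N.smul a n₁ = N.zero →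
      (M.wedge N).smul a ⟨(m₁, n₁), hp₁⟩ = (M.wedge N).zero := fun h1 h2 =>
    Subtype.ext (Prod.ext h1 h2)
  rcases hM a m₁ m₂ hm1 with hx | hx
  · rcases hN a n₁ n₂ hn1 with hy | hy
    · exact Or.inl (Subtype.ext (Prod.ext hx hy))
    · rcases hp₁ with h0 | h0
      · exact Or.inr (hz (by rw [show m₁ = M.zero from h0, M.smul_zero]) hy)
      · rcases hp₂ with h0' | h0'
        · exact Or.inr (hz (by rw [hx, show m₂ = M.zero from h0', M.smul_zero]) hy)
        · exact Or.inl (Subtype.ext (Prod.ext hx (h0.trans h0'.symm)))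
  · rcases hN a n₁ n₂ hn1 with hy | hy
    · rcases hp₁ with h0 | h0
      · rcases hp₂ with h0' | h0'
        · exact Or.inl (Subtype.ext (Prod.ext (h0.trans h0'.symm) hy))
        · exact Or.inr (hz hx (by rw [hy, show n₂ = N.zero from h0', N.smul_zero]))
      · exact Or.inr (hz hx (by rw [show n₁ = N.zero from h0, N.smul_zero]))
    · exact Or.inr (hz hx hy)

/-! ### Cardinality lemmas -/

lemma card_out_clsOf (M : FinFMod A) :
    Nat.card (Quotient.out (clsOf M)).1.carrier = Nat.card M.1.carrier := by
  obtain ⟨e⟩ : Nonempty (Iso (Quotient.out (clsOf M)).1 M.1) := Quotient.mk_out M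
  exact Nat.card_congr e.toEquiv

lemma card_le_quot_mul_sub (M : FinFMod A) (N : Set M.1.carrier) (h : M.1.IsSubmod N) :
    Nat.card M.1.carrier ≤
      Nat.card (M.quot N h).1.carrier * Nat.card (M.sub N h).1.carrier := by
  classical
  haveI : Finite (M.quot N h).1.carrier := (M.quot N h).2
  haveI : Finite (M.sub N h).1.carrier := (M.sub N h).2
  rw [← Nat.card_prod]
  refine Nat.card_le_card_of_injective
    (fun m : M.1.carrier =>
      ((if hm : m ∈ N then ⟨M.1.zero, Or.inl rfl⟩ else ⟨m, Or.inr hm⟩,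
        if hm : m ∈ N then ⟨m, hm⟩ else ⟨M.1.zero, h.1⟩) :
        {x : M.1.carrier // x = M.1.zero ∨ x ∉ N} × ↥N)) ?_
  intro m m' heq
  by_cases hm : m ∈ N <;> by_cases hm' : m' ∈ N
  · simp only [dif_pos hm, dif_pos hm', Prod.mk.injEq] at heq
    exact congrArg Subtype.val (Prod.mk.inj heq).2
  · simp only [dif_pos hm, dif_neg hm', Prod.mk.injEq] at heq
    exact (congrArg Subtype.val (Prod.mk.inj heq).2).trans (congrArg Subtype.val (Prod.mk.inj heq).1)
  · simp only [dif_neg hm, dif_pos hm', Prod.mk.injEq] at heq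
    exact (congrArg Subtype.val (Prod.mk.inj heq).1).trans (congrArg Subtype.val (Prod.mk.inj heq).2)
  · simp only [dif_neg hm, dif_neg hm', Prod.mk.injEq] at heq
    exact congrArg Subtype.val (Prod.mk.inj heq).1

lemma card_le_wedge_left (M N : FinFMod A) :
    Nat.card M.1.carrier ≤ Nat.card (M.wedge N).1.carrier := by
  haveI : Finite (M.wedge N).1.carrier := (M.wedge N).2
  exact Nat.card_le_card_of_injective
    (fun m : M.1.carrier => (⟨(m, N.1.zero), Or.inr rfl⟩ : (M.wedge N).1.carrier))
    (fun m m' hmm => congrArg (fun p => p.1.1) hmm)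

lemma card_le_wedge_right (M N : FinFMod A) :
    Nat.card N.1.carrier ≤ Nat.card (M.wedge N).1.carrier := by
  haveI : Finite (M.wedge N).1.carrier := (M.wedge N).2
  exact Nat.card_le_card_of_injective
    (fun n : N.1.carrier => (⟨(M.1.zero, n), Or.inl rfl⟩ : (M.wedge N).1.carrier))
    (fun n n' hnn => congrArg (fun p => p.1.2) hnn)

/-! ### Finiteness of the set of classes of bounded cardinality -/

variable (A) in
/-- Raw data of a module structure on `Fin (k+1)`. -/
def StructData (k : ℕ) : Type v :=
  {p : Fin (k + 1) × (A → Fin (k + 1) → Fin (k + 1)) //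
    (∀ m, p.2 1 m = m) ∧ (∀ a b m, p.2 (a * b) m = p.2 a (p.2 b m)) ∧
    (∀ m, p.2 0 m = p.1) ∧ (∀ a, p.2 a p.1 = p.1)}

/-- The bundled finite module associated to raw structure data. -/
def StructData.toMod {k : ℕ} (p : StructData A k) : FinFMod A :=
  ⟨⟨Fin (k + 1), p.1.1, p.1.2, p.2.1, p.2.2.1, p.2.2.2.1, p.2.2.2.2⟩, inferInstance⟩

instance structDataFinite [Monoid.FG A] (k : ℕ) : Finite (StructData A k) := by
  obtain ⟨S, hS, hSfin⟩ := Monoid.fg_iff.mp ‹Monoid.FG A›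
  haveI : Finite S := hSfin
  refine Finite.of_injective
    (fun p : StructData A k => ((p.1.1, fun s : S => p.1.2 s.1) :
      Fin (k + 1) × (S → Fin (k + 1) → Fin (k + 1)))) ?_
  rintro ⟨⟨z, σ⟩, h1, h2, _, _⟩ ⟨⟨z', σ'⟩, h1', h2', _, _⟩ heq
  simp only [Prod.mk.injEq] at heq
  obtain ⟨hz, hσS⟩ := heq
  have key : ∀ a : A, σ a = σ' a := by
    intro a
    have ha : a ∈ Submonoid.closure S := hS ▸ Submonoid.mem_top a
    induction ha using Submonoid.closure_induction with
    | mem x hx => exact congrFun hσS ⟨x, hx⟩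
    | one => funext m; exact (h1 m).trans (h1' m).symm
    | mul x y hx hy ihx ihy =>
        funext m
        show σ (x * y) m = σ' (x * y) m
        rw [show σ (x * y) m = σ x (σ y m) from h2 x y m,
          show σ' (x * y) m = σ' x (σ' y m) from h2' x y m, ihx, ihy]
  exact Subtype.ext (Prod.ext hz (funext key))

lemma exists_structData (c : IsoCl A) :
    ∃ k : ℕ, k + 1 = Nat.card (Quotient.out c).1.carrier ∧
      ∃ p : StructData A k, clsOf p.toMod = c := by
  set M := Quotient.out c with hM
  haveI : Finite M.1.carrier := M.2
  haveI : Nonempty M.1.carrier := ⟨M.1.zero⟩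
  have hpos : 0 < Nat.card M.1.carrier := Nat.card_pos
  obtain ⟨k, hk⟩ : ∃ k : ℕ, Nat.card M.1.carrier = k + 1 :=
    ⟨Nat.card M.1.carrier - 1, (Nat.succ_pred_eq_of_pos hpos).symm⟩
  haveI := Fintype.ofFinite M.1.carrier
  have e : M.1.carrier ≃ Fin (k + 1) :=
    Fintype.equivFinOfCardEq (by rw [← Nat.card_eq_fintype_card, hk])
  refine ⟨k, hk.symm, ⟨(e M.1.zero, fun a x => e (M.1.smul a (e.symm x))),
    ?_, ?_, ?_, ?_⟩, ?_⟩
  · intro m; simp [M.1.one_smul]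
  · intro a b m; simp [M.1.mul_smul]
  · intro m; simp [M.1.zero_smul]
  · intro a; simp [M.1.smul_zero]
  · refine (Quotient.sound ?_).trans (Quotient.out_eq c)
    refine ⟨⟨e.symm, ?_, ?_⟩⟩
    · exact e.symm_apply_apply _
    · intro a m; exact e.symm_apply_apply _

lemma finite_card_le [Monoid.FG A] (n : ℕ) :
    {c : IsoCl A | Nat.card (Quotient.out c).1.carrier ≤ n}.Finite := by
  refine ((Set.finite_Iio n).biUnion
    (fun k _ => Set.finite_range (fun p : StructData A k => clsOf p.toMod))).subset ?_
  intro c hc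
  obtain ⟨k, hk, p, hp⟩ := exists_structData c
  have hkn : k < n := by
    have := hc
    simp only [Set.mem_setOf_eq] at this
    omega
  exact Set.mem_biUnion hkn ⟨p, hp⟩

/-! ### Support lemmas -/

lemma hallMul_ne_zero {f g : IsoCl A → ℚ} {c : IsoCl A} (h : hallMul f g c ≠ 0) :
    ∃ N : Submods (Quotient.out c).1,
      f (clsOf ((Quotient.out c).quot N.1 N.2)) ≠ 0 ∧
      g (clsOf ((Quotient.out c).sub N.1 N.2)) ≠ 0 := by
  by_contra hcon
  push_neg at hcon
  apply h
  show (∑ᶠ N : Submods (Quotient.out c).1, _) = 0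
  apply finsum_eq_zero_of_forall_eq_zero
  intro N
  by_cases hfN : f (clsOf ((Quotient.out c).quot N.1 N.2)) = 0
  · rw [hfN, zero_mul]
  · rw [hcon N hfN, mul_zero]

lemma le_sup_of_mem_support {f : IsoCl A → ℚ} (hf : FinSupp f) {d : IsoCl A} (hd : f d ≠ 0) :
    Nat.card (Quotient.out d).1.carrier ≤
      hf.toFinset.sup (fun c => Nat.card (Quotient.out c).1.carrier) :=
  Finset.le_sup (f := fun c => Nat.card (Quotient.out c).1.carrier) (hf.mem_toFinset.mpr hd)

lemma finSupp_hallMul [Monoid.FG A] {f g : IsoCl A → ℚ} (hf : FinSupp f) (hg : FinSupp g) :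
    FinSupp (hallMul f g) := by
  classical
  set Bf := hf.toFinset.sup (fun c => Nat.card (Quotient.out c).1.carrier) with hBf
  set Bg := hg.toFinset.sup (fun c => Nat.card (Quotient.out c).1.carrier) with hBg
  refine (finite_card_le (Bf * Bg)).subset ?_
  intro c hc
  obtain ⟨N, hfN, hgN⟩ := hallMul_ne_zero hc
  have h1 := le_sup_of_mem_support hf hfN
  have h2 := le_sup_of_mem_support hg hgN
  rw [card_out_clsOf] at h1 h2
  calc Nat.card (Quotient.out c).1.carrier
      ≤ Nat.card ((Quotient.out c).quot N.1 N.2).1.carrier *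
        Nat.card ((Quotient.out c).sub N.1 N.2).1.carrier :=
        card_le_quot_mul_sub _ N.1 N.2
    _ ≤ Bf * Bg := Nat.mul_le_mul h1 h2

end FModule

open FModule in
/-- **`J^α` is a Hopf ideal of the Hall algebra `H_A`**: it is a two-sided ideal for the
convolution product, a co-ideal for the coproduct (`Δ(J^α) ⊆ J^α ⊗ H + H ⊗ J^α`), and
is contained in the augmentation ideal. -/
theorem Jalpha_is_hopf_ideal (A : Type v) [MonoidWithZero A] [Monoid.FG A] :
    -- contained in the augmentation ideal
    (∀ f : IsoCl A → ℚ, MemJalpha f → counitF f = 0) ∧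
    -- two-sided ideal for ⋆
    (∀ f g : IsoCl A → ℚ, MemJalpha f → FinSupp g → MemJalpha (hallMul f g)) ∧
    (∀ f g : IsoCl A → ℚ, FinSupp f → MemJalpha g → MemJalpha (hallMul f g)) ∧
    -- co-ideal: Δ(J^α) ⊆ J^α ⊗ H + H ⊗ J^α
    (∀ f : IsoCl A → ℚ, MemJalpha f →
      ∃ F G : IsoCl A → IsoCl A → ℚ, FinSupp₂ F ∧ FinSupp₂ G ∧
        (∀ c d : IsoCl A, coprodF f c d = F c d + G c d) ∧
        (∀ c d : IsoCl A, ClTypeAlpha c → F c d = 0) ∧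
        (∀ c d : IsoCl A, ClTypeAlpha d → G c d = 0)) := by
  classical
  refine ⟨?_, ?_, ?_, ?_⟩
  · -- augmentation
    intro f hf
    exact hf.2 _ (clTypeAlpha_clsOf.mpr (fun a m₁ m₂ _ => Or.inl rfl))
  · -- left ideal
    intro f g hf hg
    refine ⟨finSupp_hallMul hf.1 hg, ?_⟩
    intro c hc
    show (∑ᶠ N : Submods (Quotient.out c).1, _) = 0
    apply finsum_eq_zero_of_forall_eq_zero
    intro N
    rw [hf.2 _ (clTypeAlpha_clsOf.mpr (hc.typeQuot N.2)), zero_mul]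
  · -- right ideal
    intro f g hf hg
    refine ⟨finSupp_hallMul hf hg.1, ?_⟩
    intro c hc
    show (∑ᶠ N : Submods (Quotient.out c).1, _) = 0
    apply finsum_eq_zero_of_forall_eq_zero
    intro N
    rw [hg.2 _ (clTypeAlpha_clsOf.mpr (hc.typeSub N.2)), mul_zero]
  · -- co-ideal
    intro f hf
    refine ⟨fun c d => if ClTypeAlpha c then 0 else coprodF f c d,
      fun c d => if ClTypeAlpha c then coprodF f c d else 0, ?_, ?_, ?_, ?_, ?_⟩
    · -- FinSupp₂ F
      refine (((finite_card_le (hf.1.toFinset.sup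
          (fun c => Nat.card (Quotient.out c).1.carrier))).prod
        (finite_card_le (hf.1.toFinset.sup
          (fun c => Nat.card (Quotient.out c).1.carrier)))).subset ?_)
      rintro ⟨c, d⟩ hcd
      have hne : coprodF f c d ≠ 0 := by
        intro h0
        apply hcd
        show (if ClTypeAlpha c then 0 else coprodF f c d) = 0
        rw [h0]; simp
      have hmem := le_sup_of_mem_support hf.1 hne
      rw [card_out_clsOf] at hmem
      exact ⟨le_trans (card_le_wedge_left _ _) hmem,
        le_trans (card_le_wedge_right _ _) hmem⟩
    · -- FinSupp₂ G
      refine (((finite_card_le (hf.1.toFinset.sup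
          (fun c => Nat.card (Quotient.out c).1.carrier))).prod
        (finite_card_le (hf.1.toFinset.sup
          (fun c => Nat.card (Quotient.out c).1.carrier)))).subset ?_)
      rintro ⟨c, d⟩ hcd
      have hne : coprodF f c d ≠ 0 := by
        intro h0
        apply hcd
        show (if ClTypeAlpha c then coprodF f c d else 0) = 0
        rw [h0]; simp
      have hmem := le_sup_of_mem_support hf.1 hne
      rw [card_out_clsOf] at hmem
      exact ⟨le_trans (card_le_wedge_left _ _) hmem,
        le_trans (card_le_wedge_right _ _) hmem⟩
    · intro c d
      by_cases h : ClTypeAlpha c <;> simp [h]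
    · intro c d hc
      simp [hc]
    · intro c d hd
      by_cases hc : ClTypeAlpha c
      · simp only [if_pos hc]
        exact hf.2 _ (clTypeAlpha_clsOf.mpr (hc.typeWedge hd))
      · simp [hc]
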